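/- arXiv:2201.06036 — 5 statements merged into one kernel-verified Lean document; each statement's English description precedes it below -/
import Mathlib

section
/- Every n×n complex matrix A with spectral norm at most 1 can be written as a finite convex combination of unitary n×n matrices. -/
open scoped Matrix BigOperators

noncomputable def specNorm {n : ℕ} (A : Matrix (Fin n) (Fin n) ℂ) : ℝ :=
  ‖Matrix.toEuclideanCLM (𝕜 := ℂ) A‖

noncomputable def singularValues {n : ℕ} (A : Matrix (Fin n) (Fin n) ℂ) : Fin n → ℝ :=
  fun i => Real.sqrt
    (((Matrix.isHermitian_conjTranspose_mul_self A).eigenvalues ∘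
      Tuple.sort (Matrix.isHermitian_conjTranspose_mul_self A).eigenvalues) i.rev)

open scoped ComplexInnerProductSpace ComplexConjugate

lemma columns_mem_unitaryGroup {n : ℕ}
    (b : Fin n → EuclideanSpace ℂ (Fin n))
    (hb : Orthonormal ℂ b) :
    (Matrix.of fun j i => b i j) ∈ Matrix.unitaryGroup (Fin n) ℂ := by
  rw [Matrix.mem_unitaryGroup_iff']
  ext i j
  rw [Matrix.star_eq_conjTranspose, Matrix.mul_apply]
  have := (orthonormal_iff_ite (𝕜 := ℂ)).mp hb i j
  rw [PiLp.inner_apply] at this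
  simpa [Matrix.one_apply, RCLike.inner_apply, Matrix.conjTranspose_apply, mul_comm] using this

lemma toEuclideanCLM_apply' {n : ℕ} (M : Matrix (Fin n) (Fin n) ℂ) (x : EuclideanSpace ℂ (Fin n)) :
    ⇑(Matrix.toEuclideanCLM (𝕜 := ℂ) M x) = M *ᵥ ⇑x := rfl

lemma inner_toEuclideanCLM {n : ℕ} (A : Matrix (Fin n) (Fin n) ℂ) (x y : EuclideanSpace ℂ (Fin n)) :
    ⟪Matrix.toEuclideanCLM (𝕜 := ℂ) A x, Matrix.toEuclideanCLM (𝕜 := ℂ) A y⟫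
      = ⟪x, Matrix.toEuclideanCLM (𝕜 := ℂ) (Aᴴ * A) y⟫ := by
  have h1 : Matrix.toEuclideanCLM (𝕜 := ℂ) (Aᴴ * A)
      = ContinuousLinearMap.adjoint (Matrix.toEuclideanCLM (𝕜 := ℂ) A) *
        Matrix.toEuclideanCLM (𝕜 := ℂ) A := by
    rw [_root_.map_mul, ← ContinuousLinearMap.star_eq_adjoint, ← map_star,
      Matrix.star_eq_conjTranspose]
  rw [h1, ContinuousLinearMap.mul_apply, ContinuousLinearMap.adjoint_inner_right]

/-- Every contraction is a finite convex combination of unitary matrices. -/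
theorem contraction_eq_convexCombination_unitary {n : ℕ}
    (A : Matrix (Fin n) (Fin n) ℂ) (hA : specNorm A ≤ 1) :
    ∃ (m : ℕ) (α : Fin m → ℝ) (U : Fin m → Matrix (Fin n) (Fin n) ℂ),
      (∀ i, U i ∈ Matrix.unitaryGroup (Fin n) ℂ) ∧
      (∀ i, 0 ≤ α i) ∧ (∑ i, α i = 1) ∧
      A = ∑ i, (α i : ℂ) • U i := by
  classical
  set T := Matrix.toEuclideanCLM (𝕜 := ℂ) A with hT
  have h : (Aᴴ * A).IsHermitian := Matrix.isHermitian_conjTranspose_mul_self A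
  set v : Fin n → EuclideanSpace ℂ (Fin n) := fun i => h.eigenvectorBasis i with hv
  set μ : Fin n → ℝ := h.eigenvalues with hμdef
  have hortho : Orthonormal ℂ v := h.eigenvectorBasis.orthonormal
  have heig : ∀ i, Matrix.toEuclideanCLM (𝕜 := ℂ) (Aᴴ * A) (v i) = (μ i : ℂ) • v i := by
    intro i
    ext k
    show ((Aᴴ * A) *ᵥ ⇑(v i)) k = _
    rw [congrFun (h.mulVec_eigenvectorBasis i) k]
    simp [Complex.real_smul]
    rfl
  have hinner : ∀ i j, ⟪T (v i), T (v j)⟫ = (μ j : ℂ) * ⟪v i, v j⟫ := by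
    intro i j
    rw [hT, inner_toEuclideanCLM, heig, inner_smul_right]
  have hvnorm : ∀ i, ⟪v i, v i⟫ = 1 := by
    intro i
    simpa using (orthonormal_iff_ite (𝕜 := ℂ)).mp hortho i i
  have hn : ∀ i, ‖T (v i)‖ ^ 2 = μ i := by
    intro i
    have h1 : (μ i : ℂ) = ⟪T (v i), T (v i)⟫ := by rw [hinner, hvnorm, mul_one]
    rw [inner_self_eq_norm_sq_to_K] at h1
    apply Complex.ofReal_injective
    rw [h1]
    norm_cast
  have hμ0 : ∀ i, 0 ≤ μ i := fun i =>
    A.eigenvalues_conjTranspose_mul_self_nonneg i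
  have hμ1 : ∀ i, μ i ≤ 1 := by
    intro i
    have h2 : ‖T (v i)‖ ≤ 1 := by
      calc ‖T (v i)‖ ≤ ‖T‖ * ‖v i‖ := T.le_opNorm _
        _ = specNorm A := by rw [hortho.1 i, mul_one]; rfl
        _ ≤ 1 := hA
    calc μ i = ‖T (v i)‖ ^ 2 := (hn i).symm
      _ ≤ 1 := pow_le_one₀ (norm_nonneg _) h2
  set σ : Fin n → ℝ := fun i => Real.sqrt (μ i) with hσdef
  have hσ0 : ∀ i, 0 ≤ σ i := fun i => Real.sqrt_nonneg _
  have hσsq : ∀ i, σ i ^ 2 = μ i := fun i => Real.sq_sqrt (hμ0 i)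
  have hσ1 : ∀ i, σ i ≤ 1 := by
    intro i
    nlinarith [hσsq i, hμ1 i, hσ0 i]
  set w : Fin n → EuclideanSpace ℂ (Fin n) := fun i => ((σ i : ℂ))⁻¹ • T (v i) with hw
  have hwortho : Orthonormal ℂ (Set.restrict {i | σ i ≠ 0} w) := by
    rw [orthonormal_iff_ite]
    rintro ⟨i, hi⟩ ⟨j, hj⟩
    simp only [Set.restrict, Set.domRestrict_apply, hw]
    rw [inner_smul_left, inner_smul_right, hinner]
    rcases eq_or_ne i j with rfl | hij
    · rw [hvnorm, mul_one]
      have hμσ : (μ i : ℂ) = (σ i : ℂ) ^ 2 := by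
        rw [← hσsq i]; push_cast; ring
      have hσne : (σ i : ℂ) ≠ 0 := Complex.ofReal_ne_zero.mpr hi
      rw [map_inv₀, Complex.conj_ofReal, if_pos rfl, hμσ]
      field_simp
    · have h0 : ⟪v i, v j⟫ = 0 := by
        have := (orthonormal_iff_ite (𝕜 := ℂ)).mp hortho i j
        rwa [if_neg hij] at this
      rw [h0, if_neg (by simpa [Subtype.ext_iff] using hij)]
      ring
  obtain ⟨b, hb⟩ := hwortho.exists_orthonormalBasis_extension_of_card_eq (by simp)
  have hcol : ∀ i, T (v i) = (σ i : ℂ) • b i := by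
    intro i
    by_cases hi : σ i = 0
    · have hμi : μ i = 0 := by rw [← hσsq i, hi]; ring
      have hz : ‖T (v i)‖ = 0 := by
        have := hn i
        rw [hμi, pow_eq_zero_iff (two_ne_zero)] at this
        exact this
      rw [norm_eq_zero] at hz
      rw [hz, hi]
      simp
    · rw [hb i hi, hw, smul_smul, mul_inv_cancel₀ (Complex.ofReal_ne_zero.mpr hi), one_smul]
  set Mv : Matrix (Fin n) (Fin n) ℂ := Matrix.of (fun j i => v i j) with hMv
  set Mb : Matrix (Fin n) (Fin n) ℂ := Matrix.of (fun j i => b i j) with hMb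
  have hMvU : Mv ∈ Matrix.unitaryGroup (Fin n) ℂ := columns_mem_unitaryGroup v hortho
  have hMbU : Mb ∈ Matrix.unitaryGroup (Fin n) ℂ := columns_mem_unitaryGroup _ b.orthonormal
  have hAMv : A * Mv = Mb * Matrix.diagonal (fun i => (σ i : ℂ)) := by
    ext j i
    rw [Matrix.mul_apply, Matrix.mul_diagonal]
    have h1 : (A *ᵥ ⇑(v i)) j = (σ i : ℂ) * b i j := by
      rw [← toEuclideanCLM_apply', ← hT, hcol i]
      rfl
    have h2 : (A *ᵥ ⇑(v i)) j = ∑ k, A j k * v i k := rfl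
    rw [h2] at h1
    rw [hMv, hMb]
    simpa [mul_comm] using h1
  have hA' : A = Mb * Matrix.diagonal (fun i => (σ i : ℂ)) * star Mv := by
    have h1 : Mv * star Mv = 1 := Matrix.mem_unitaryGroup_iff.mp hMvU
    calc A = A * (Mv * star Mv) := by rw [h1, mul_one]
      _ = (A * Mv) * star Mv := by rw [mul_assoc]
      _ = _ := by rw [hAMv]
  set z : Fin n → ℂ := fun i => (σ i : ℂ) + (Real.sqrt (1 - σ i ^ 2) : ℝ) * Complex.I with hzdef
  have hzz : ∀ i, conj (z i) * z i = 1 := by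
    intro i
    have h1 : (0:ℝ) ≤ 1 - σ i ^ 2 := by nlinarith [hσ1 i, hσ0 i]
    rw [mul_comm, Complex.mul_conj, hzdef]
    have : Complex.normSq ((σ i : ℂ) + (Real.sqrt (1 - σ i ^ 2) : ℝ) * Complex.I)
        = σ i ^ 2 + Real.sqrt (1 - σ i ^ 2) ^ 2 := by
      rw [Complex.normSq_add_mul_I]
    rw [this, Real.sq_sqrt h1]
    push_cast
    ring
  have hzre : ∀ i, z i + conj (z i) = 2 * (σ i : ℂ) := by
    intro i
    rw [Complex.add_conj, hzdef]
    simp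
  have hdiagU : ∀ (d : Fin n → ℂ), (∀ i, conj (d i) * d i = 1) →
      Matrix.diagonal d ∈ Matrix.unitaryGroup (Fin n) ℂ := by
    intro d hd
    rw [Matrix.mem_unitaryGroup_iff', Matrix.star_eq_conjTranspose,
      Matrix.diagonal_conjTranspose, Matrix.diagonal_mul_diagonal]
    ext i j
    rcases eq_or_ne i j with rfl | hij
    · rw [Matrix.diagonal_apply_eq, Matrix.one_apply_eq]
      exact hd i
    · simp [Matrix.diagonal_apply_ne _ hij, Matrix.one_apply_ne hij]
  have hU1 : Mb * Matrix.diagonal z * star Mv ∈ Matrix.unitaryGroup (Fin n) ℂ :=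
    mul_mem (mul_mem hMbU (hdiagU z hzz)) (Unitary.star_mem hMvU)
  have hU2 : Mb * Matrix.diagonal (fun i => conj (z i)) * star Mv ∈
      Matrix.unitaryGroup (Fin n) ℂ := by
    refine mul_mem (mul_mem hMbU (hdiagU _ ?_)) (Unitary.star_mem hMvU)
    intro i
    rw [Complex.conj_conj, mul_comm]
    exact hzz i
  refine ⟨2, ![1/2, 1/2], ![Mb * Matrix.diagonal z * star Mv,
      Mb * Matrix.diagonal (fun i => conj (z i)) * star Mv], ?_, ?_, ?_, ?_⟩
  · intro i
    fin_cases i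
    · exact hU1
    · exact hU2
  · intro i
    fin_cases i <;> norm_num
  · rw [Fin.sum_univ_two]
    norm_num
  · rw [Fin.sum_univ_two]
    simp only [Matrix.cons_val_zero, Matrix.cons_val_one, Matrix.head_cons]
    rw [hA']
    have hdiag : Matrix.diagonal (fun i => (σ i : ℂ))
        = (2:ℂ)⁻¹ • (Matrix.diagonal z + Matrix.diagonal (fun i => conj (z i))) := by
      rw [Matrix.diagonal_add]
      ext i j
      rcases eq_or_ne i j with rfl | hij
      · simp only [Matrix.diagonal_apply_eq, Matrix.smul_apply, Pi.add_apply, smul_eq_mul]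
        rw [hzre i]
        ring
      · simp [Matrix.diagonal_apply_ne _ hij]
    rw [hdiag]
    have hhalf : (((1:ℝ)/2 : ℝ) : ℂ) = (2:ℂ)⁻¹ := by push_cast; ring
    rw [hhalf]
    rw [Matrix.mul_smul, Matrix.smul_mul, Matrix.mul_add, Matrix.add_mul, smul_add]
end

section
/- Every matrix in the unit ball of the spectral norm on 3×3 complex matrices can be written as a convex combination of at most 4 unitary 3×3 matrices (i.e., the Carathéodory number of B(3) with respect to U(3) is at most 4). -/
open scoped Matrix BigOperators
open scoped Matrix.Norms.L2Operator
open Matrix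

lemma specNorm_eq_norm {n : ℕ} (A : Matrix (Fin n) (Fin n) ℂ) : specNorm A = ‖A‖ := rfl

lemma conj_mul_conj {n : ℕ} (U : Matrix (Fin n) (Fin n) ℂ) (hU : star U * U = 1)
    (f g : Fin n → ℂ) :
    (U * diagonal f * star U) * (U * diagonal g * star U)
      = U * diagonal (fun i => f i * g i) * star U := by
  have : diagonal f * diagonal g = diagonal (fun i => f i * g i) := by
    rw [diagonal_mul_diagonal]
  calc (U * diagonal f * star U) * (U * diagonal g * star U)
      = U * diagonal f * (star U * U) * diagonal g * star U := by
        simp only [mul_assoc]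
    _ = U * (diagonal f * diagonal g) * star U := by rw [hU]; simp only [mul_one, mul_assoc]
    _ = _ := by rw [this]

lemma star_conj {n : ℕ} (U : Matrix (Fin n) (Fin n) ℂ) (f : Fin n → ℂ) :
    star (U * diagonal f * star U) = U * diagonal (fun i => star (f i)) * star U := by
  have : star (diagonal f) = diagonal (fun i => star (f i)) := by
    show (diagonal f)ᴴ = _
    rw [diagonal_conjTranspose]
    rfl
  simp only [StarMul.star_mul, star_star, mul_assoc, this]

lemma eig_le_one (A : Matrix (Fin 3) (Fin 3) ℂ) (hA : ‖A‖ ≤ 1) (i : Fin 3) :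
    (Matrix.isHermitian_conjTranspose_mul_self A).eigenvalues i ≤ 1 := by
  set h := Matrix.isHermitian_conjTranspose_mul_self A
  have hnn : 0 ≤ h.eigenvalues i := Matrix.eigenvalues_conjTranspose_mul_self_nonneg A i
  have hnorm : ‖Aᴴ * A‖ ≤ 1 := by
    rw [Matrix.l2_opNorm_conjTranspose_mul_self]
    nlinarith [norm_nonneg A]
  set v : EuclideanSpace ℂ (Fin 3) := h.eigenvectorBasis i with hv
  have hvnorm : ‖v‖ = 1 := h.eigenvectorBasis.orthonormal.1 i
  have hmv : (Aᴴ * A) *ᵥ ⇑v = h.eigenvalues i • ⇑v := h.mulVec_eigenvectorBasis i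
  have key : ‖(EuclideanSpace.equiv (Fin 3) ℂ).symm ((Aᴴ * A) *ᵥ ⇑v)‖ ≤ ‖Aᴴ * A‖ * ‖v‖ :=
    Matrix.l2_opNorm_mulVec _ v
  rw [hmv] at key
  have : (EuclideanSpace.equiv (Fin 3) ℂ).symm (h.eigenvalues i • ⇑v) = h.eigenvalues i • v := rfl
  rw [this, norm_smul, hvnorm, mul_one, mul_one] at key
  calc h.eigenvalues i = ‖h.eigenvalues i‖ := by rw [Real.norm_of_nonneg hnn]
    _ ≤ 1 := le_trans key hnorm

lemma invertible_case (A : Matrix (Fin 3) (Fin 3) ℂ) (hA : ‖A‖ ≤ 1) (hU : IsUnit A) :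
    ∃ U₁ U₂ : Matrix (Fin 3) (Fin 3) ℂ, U₁ ∈ Matrix.unitaryGroup (Fin 3) ℂ ∧
      U₂ ∈ Matrix.unitaryGroup (Fin 3) ℂ ∧
      A = ((1/2 : ℝ) : ℂ) • U₁ + ((1/2 : ℝ) : ℂ) • U₂ := by
  set h := Matrix.isHermitian_conjTranspose_mul_self A with hh
  set μ : Fin 3 → ℝ := h.eigenvalues with hμ
  -- positivity of eigenvalues
  have hdet : IsUnit (Aᴴ * A).det := by
    rw [Matrix.det_mul, Matrix.det_conjTranspose]
    exact ((hU.map Matrix.detMonoidHom).star.mul (hU.map Matrix.detMonoidHom))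
  have hprod : (Aᴴ * A).det = ∏ i, (μ i : ℂ) := h.det_eq_prod_eigenvalues
  have hμne : ∀ i, μ i ≠ 0 := by
    intro i hi
    rw [hprod] at hdet
    have := hdet.ne_zero
    rw [Finset.prod_eq_zero (Finset.mem_univ i) (by rw [hi]; simp)] at this
    exact this rfl
  have hμpos : ∀ i, 0 < μ i := fun i =>
    lt_of_le_of_ne (Matrix.eigenvalues_conjTranspose_mul_self_nonneg A i) (Ne.symm (hμne i))
  have hμ1 : ∀ i, μ i ≤ 1 := fun i => eig_le_one A hA i
  -- spectral data
  set U0 : Matrix (Fin 3) (Fin 3) ℂ := (h.eigenvectorUnitary : Matrix (Fin 3) (Fin 3) ℂ) with hU0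
  have hU0u : star U0 * U0 = 1 := Matrix.mem_unitaryGroup_iff'.mp h.eigenvectorUnitary.2
  have hU0u' : U0 * star U0 = 1 := Matrix.mem_unitaryGroup_iff.mp h.eigenvectorUnitary.2
  have hspec : Aᴴ * A = U0 * Matrix.diagonal (fun i => (μ i : ℂ)) * star U0 := by
    have := h.spectral_theorem
    rw [Unitary.conjStarAlgAut_apply] at this
    exact this
  set d : Fin 3 → ℝ := fun i => Real.sqrt (μ i) with hd
  have hdpos : ∀ i, 0 < d i := fun i => Real.sqrt_pos.mpr (hμpos i)
  set s : Fin 3 → ℝ := fun i => Real.sqrt (1 - μ i) with hs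
  set z : Fin 3 → ℂ := fun i => (d i : ℂ) + Complex.I * (s i : ℂ) with hz
  have hzz : ∀ i, star (z i) * z i = 1 := by
    intro i
    have h1 : star (z i) = (d i : ℂ) - Complex.I * (s i : ℂ) := by
      simp [hz, Complex.ext_iff]
    rw [h1]
    have hd2 : (d i : ℂ) * (d i : ℂ) = (μ i : ℂ) := by
      rw [← Complex.ofReal_mul, Real.mul_self_sqrt (hμpos i).le]
    have hs2 : (s i : ℂ) * (s i : ℂ) = ((1 - μ i : ℝ) : ℂ) := by
      rw [← Complex.ofReal_mul, Real.mul_self_sqrt (by linarith [hμ1 i])]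
    have : ((d i : ℂ) - Complex.I * (s i : ℂ)) * ((d i : ℂ) + Complex.I * (s i : ℂ))
        = (d i : ℂ) * (d i : ℂ) + (s i : ℂ) * (s i : ℂ) := by
      have hI : Complex.I * Complex.I = -1 := Complex.I_mul_I
      ring_nf
      rw [Complex.I_sq]
      ring
    rw [this, hd2, hs2]
    push_cast
    ring
  set Q : Matrix (Fin 3) (Fin 3) ℂ :=
    U0 * Matrix.diagonal (fun i => ((d i)⁻¹ : ℂ)) * star U0 with hQ
  have hQstar : star Q = Q := by
    rw [hQ, star_conj]
    congr 1
    · congr 1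
      congr 1
      funext i
      simp [Complex.ext_iff]
  set V₁ : Matrix (Fin 3) (Fin 3) ℂ := U0 * Matrix.diagonal z * star U0 with hV₁
  set V₂ : Matrix (Fin 3) (Fin 3) ℂ :=
    U0 * Matrix.diagonal (fun i => star (z i)) * star U0 with hV₂
  -- star Q * (Aᴴ A) * Q = 1
  have hQAAQ : Q * (Aᴴ * A) * Q = 1 := by
    rw [hspec, hQ, conj_mul_conj U0 hU0u, conj_mul_conj U0 hU0u]
    have : (fun i => (fun i => ((d i)⁻¹ : ℂ) * (μ i : ℂ)) i * ((d i)⁻¹ : ℂ)) = fun _ => (1 : ℂ) := by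
      funext i
      show ((d i : ℂ))⁻¹ * (μ i : ℂ) * ((d i : ℂ))⁻¹ = 1
      have : (μ i : ℂ) = (d i : ℂ) * (d i : ℂ) := by
        rw [← Complex.ofReal_mul, Real.mul_self_sqrt (hμpos i).le]
      rw [this]
      have hdne : (d i : ℂ) ≠ 0 := by
        simp [Complex.ofReal_ne_zero]
        exact (hdpos i).ne'
      field_simp
    rw [this, Matrix.diagonal_one, mul_one, hU0u']
  refine ⟨A * Q * V₁, A * Q * V₂, ?_, ?_, ?_⟩
  · rw [Matrix.mem_unitaryGroup_iff']
    calc star (A * Q * V₁) * (A * Q * V₁)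
        = star V₁ * (star Q * ((star A * A) * (Q * V₁))) := by
          simp only [StarMul.star_mul, mul_assoc]
      _ = star V₁ * (Q * (Aᴴ * A) * Q * V₁) := by
          rw [hQstar]; simp only [mul_assoc]; rfl
      _ = star V₁ * V₁ := by rw [hQAAQ, one_mul]
      _ = 1 := by
          rw [hV₁, star_conj, conj_mul_conj U0 hU0u]
          have : (fun i => star (z i) * z i) = fun _ => (1:ℂ) := funext hzz
          rw [this, Matrix.diagonal_one, mul_one, hU0u']
  · rw [Matrix.mem_unitaryGroup_iff']
    calc star (A * Q * V₂) * (A * Q * V₂)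
        = star V₂ * (star Q * ((star A * A) * (Q * V₂))) := by
          simp only [StarMul.star_mul, mul_assoc]
      _ = star V₂ * (Q * (Aᴴ * A) * Q * V₂) := by
          rw [hQstar]; simp only [mul_assoc]; rfl
      _ = star V₂ * V₂ := by rw [hQAAQ, one_mul]
      _ = 1 := by
          rw [hV₂, star_conj, conj_mul_conj U0 hU0u]
          have : (fun i => star (star (z i)) * star (z i)) = fun _ => (1:ℂ) := by
            funext i
            rw [star_star]
            rw [← hzz i]
            ring
          rw [this, Matrix.diagonal_one, mul_one, hU0u']
  · have hVsum : Q * (V₁ + V₂) = (2 : ℂ) • (1 : Matrix (Fin 3) (Fin 3) ℂ) := by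
      rw [mul_add, hQ, hV₁, hV₂, conj_mul_conj U0 hU0u, conj_mul_conj U0 hU0u,
        ← add_mul, ← mul_add, Matrix.diagonal_add]
      have h1 : (fun i => ((d i)⁻¹ : ℂ) * z i + ((d i)⁻¹ : ℂ) * star (z i))
          = fun _ => (2 : ℂ) := by
        funext i
        show ((d i : ℂ))⁻¹ * z i + ((d i : ℂ))⁻¹ * star (z i) = 2
        have hstar : star (z i) = (d i : ℂ) - Complex.I * (s i : ℂ) := by
          simp [hz, Complex.ext_iff]
        have hdne : (d i : ℂ) ≠ 0 := by
          simp only [ne_eq, Complex.ofReal_eq_zero]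
          exact (hdpos i).ne'
        rw [hstar]
        show ((d i : ℂ))⁻¹ * ((d i : ℂ) + Complex.I * (s i : ℂ)) + _ = 2
        field_simp
        ring
      rw [h1]
      have h2 : Matrix.diagonal (fun _ : Fin 3 => (2 : ℂ)) = (2 : ℂ) • 1 := by
        ext i j
        by_cases hij : i = j <;> simp [Matrix.diagonal, Matrix.one_apply, hij]
      rw [h2, mul_smul_comm, smul_mul_assoc, mul_one, hU0u']
    have hsum : A * Q * V₁ + A * Q * V₂ = (2 : ℂ) • A := by
      have e : A * Q * V₁ + A * Q * V₂ = A * (Q * (V₁ + V₂)) := by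
        rw [mul_add, mul_add]
        simp only [mul_assoc]
      rw [e, hVsum, mul_smul_comm, mul_one]
    have hc : ((1/2 : ℝ) : ℂ) = (1/2 : ℂ) := by push_cast; ring
    rw [hc, ← smul_add, hsum, smul_smul]
    norm_num

def goodSet : Set (Matrix (Fin 3) (Fin 3) ℂ) :=
  {A | ∃ (α : Fin 4 → ℝ) (U : Fin 4 → Matrix (Fin 3) (Fin 3) ℂ),
      (∀ i, U i ∈ Matrix.unitaryGroup (Fin 3) ℂ) ∧
      (∀ i, 0 ≤ α i) ∧ (∑ i, α i = 1) ∧ A = ∑ i, (α i : ℂ) • U i}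

lemma isCompact_unitarySet :
    IsCompact {U : Matrix (Fin 3) (Fin 3) ℂ | U ∈ Matrix.unitaryGroup (Fin 3) ℂ} := by
  have hclosed : IsClosed {U : Matrix (Fin 3) (Fin 3) ℂ | U ∈ Matrix.unitaryGroup (Fin 3) ℂ} := by
    have : {U : Matrix (Fin 3) (Fin 3) ℂ | U ∈ Matrix.unitaryGroup (Fin 3) ℂ}
        = (fun U : Matrix (Fin 3) (Fin 3) ℂ => star U * U) ⁻¹' {1}
          ∩ (fun U : Matrix (Fin 3) (Fin 3) ℂ => U * star U) ⁻¹' {1} := by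
      ext U
      simp only [Set.mem_setOf_eq, Set.mem_inter_iff, Set.mem_preimage, Set.mem_singleton_iff]
      exact Unitary.mem_iff
    rw [this]
    exact ((isClosed_singleton.preimage (continuous_star.mul continuous_id)).inter
      (isClosed_singleton.preimage (continuous_id.mul continuous_star)))
  have hbounded : Bornology.IsBounded
      {U : Matrix (Fin 3) (Fin 3) ℂ | U ∈ Matrix.unitaryGroup (Fin 3) ℂ} := by
    rw [Metric.isBounded_iff_subset_closedBall 0]
    refine ⟨1, fun U hU => ?_⟩
    rw [Metric.mem_closedBall, dist_zero_right]
    exact le_of_eq (CStarRing.norm_of_mem_unitary (E := Matrix (Fin 3) (Fin 3) ℂ) hU)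
  exact Metric.isCompact_of_isClosed_isBounded hclosed hbounded

lemma isClosed_goodSet : IsClosed goodSet := by
  have hK : IsCompact ((stdSimplex ℝ (Fin 4)) ×ˢ
      (Set.univ.pi fun _ : Fin 4 =>
        {U : Matrix (Fin 3) (Fin 3) ℂ | U ∈ Matrix.unitaryGroup (Fin 3) ℂ})) :=
    (isCompact_stdSimplex _ _).prod (isCompact_univ_pi fun _ => isCompact_unitarySet)
  have hcont : Continuous (fun p : (Fin 4 → ℝ) × (Fin 4 → Matrix (Fin 3) (Fin 3) ℂ) =>
      ∑ i, ((p.1 i : ℂ)) • p.2 i) := by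
    refine continuous_finset_sum _ fun i _ => ?_
    exact ((Complex.continuous_ofReal.comp ((continuous_apply i).comp continuous_fst)).smul
      ((continuous_apply i).comp continuous_snd))
  have himg : goodSet = (fun p : (Fin 4 → ℝ) × (Fin 4 → Matrix (Fin 3) (Fin 3) ℂ) =>
      ∑ i, ((p.1 i : ℂ)) • p.2 i) '' ((stdSimplex ℝ (Fin 4)) ×ˢ
      (Set.univ.pi fun _ : Fin 4 =>
        {U : Matrix (Fin 3) (Fin 3) ℂ | U ∈ Matrix.unitaryGroup (Fin 3) ℂ})) := by
    ext A
    constructor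
    · rintro ⟨α, U, hU, hα0, hα1, hAeq⟩
      exact ⟨(α, U), ⟨⟨hα0, hα1⟩, fun i _ => hU i⟩, hAeq.symm⟩
    · rintro ⟨⟨α, U⟩, ⟨⟨hα0, hα1⟩, hU⟩, hAeq⟩
      exact ⟨α, U, fun i => hU i (Set.mem_univ i), hα0, hα1, hAeq.symm⟩
  rw [himg]
  exact (hK.image hcont).isClosed

lemma exists_delta (A : Matrix (Fin 3) (Fin 3) ℂ) (k : ℕ) :
    ∃ δ : ℝ, 0 < δ ∧ δ < 1/(k+1) ∧ IsUnit (A + (δ:ℂ) • (1 : Matrix (Fin 3) (Fin 3) ℂ)) := by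
  have hinj : Function.Injective (fun δ : ℝ => (-δ : ℂ)) := by
    intro a b hab
    simpa using hab
  have hfin : Set.Finite {δ : ℝ | ¬ IsUnit (A + (δ:ℂ) • (1 : Matrix (Fin 3) (Fin 3) ℂ))} := by
    have hsub : {δ : ℝ | ¬ IsUnit (A + (δ:ℂ) • (1 : Matrix (Fin 3) (Fin 3) ℂ))}
        ⊆ (fun δ : ℝ => (-δ : ℂ)) ⁻¹' (spectrum ℂ A) := by
      intro δ hδ
      simp only [Set.mem_preimage]
      rw [spectrum.mem_iff]
      intro hunit
      apply hδ
      have he : algebraMap ℂ (Matrix (Fin 3) (Fin 3) ℂ) (-(δ:ℂ)) - A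
          = -(A + (δ:ℂ) • 1) := by
        rw [Algebra.algebraMap_eq_smul_one]
        rw [neg_smul]
        abel
      rw [he] at hunit
      simpa using hunit.neg
    exact Set.Finite.subset ((Matrix.finite_spectrum A).preimage
      (Set.injOn_of_injective hinj)) hsub
  have hioo : (Set.Ioo (0:ℝ) (1/(k+1))).Infinite := by
    apply Set.Ioo_infinite
    positivity
  obtain ⟨δ, hδ⟩ := (hioo.diff hfin).nonempty
  exact ⟨δ, hδ.1.1, hδ.1.2, not_not.mp hδ.2⟩

/-- Carathéodory number: every 3×3 contraction is a convex combination of at most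
4 unitary matrices. -/
theorem contraction_convexCombination_four_unitaries
    (A : Matrix (Fin 3) (Fin 3) ℂ) (hA : specNorm A ≤ 1) :
    ∃ (α : Fin 4 → ℝ) (U : Fin 4 → Matrix (Fin 3) (Fin 3) ℂ),
      (∀ i, U i ∈ Matrix.unitaryGroup (Fin 3) ℂ) ∧
      (∀ i, 0 ≤ α i) ∧ (∑ i, α i = 1) ∧
      A = ∑ i, (α i : ℂ) • U i := by
  rw [specNorm_eq_norm] at hA
  have hgood : ∀ M : Matrix (Fin 3) (Fin 3) ℂ, ‖M‖ ≤ 1 → IsUnit M → M ∈ goodSet := by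
    intro M hM hMu
    obtain ⟨U₁, U₂, hU₁, hU₂, heq⟩ := invertible_case M hM hMu
    refine ⟨![1/2, 1/2, 0, 0], ![U₁, U₂, 1, 1], ?_, ?_, ?_, ?_⟩
    · intro i
      fin_cases i <;> simp [hU₁, hU₂, Matrix.mem_unitaryGroup_iff]
    · intro i
      fin_cases i <;> norm_num
    · simp [Fin.sum_univ_four]
      norm_num
    · rw [heq]
      simp [Fin.sum_univ_four]
      module
  have hmem : A ∈ goodSet := by
    choose δ hδ0 hδlt hδu using exists_delta A
    set B : ℕ → Matrix (Fin 3) (Fin 3) ℂ :=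
      fun k => (((1 + δ k)⁻¹ : ℝ) : ℂ) • (A + (δ k : ℂ) • 1) with hB
    have hBmem : ∀ k, B k ∈ goodSet := by
      intro k
      have h1δ : (0:ℝ) < 1 + δ k := by linarith [hδ0 k]
      apply hgood
      · have hn1 : ‖(1 : Matrix (Fin 3) (Fin 3) ℂ)‖ = 1 := CStarRing.norm_one
        have h2 : ‖A + (δ k : ℂ) • (1 : Matrix (Fin 3) (Fin 3) ℂ)‖ ≤ 1 + δ k := by
          calc ‖A + (δ k : ℂ) • (1 : Matrix (Fin 3) (Fin 3) ℂ)‖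
              ≤ ‖A‖ + ‖(δ k : ℂ) • (1 : Matrix (Fin 3) (Fin 3) ℂ)‖ := norm_add_le _ _
            _ = ‖A‖ + δ k := by
                rw [norm_smul, hn1, mul_one, Complex.norm_real,
                  Real.norm_of_nonneg (hδ0 k).le]
            _ ≤ 1 + δ k := by linarith
        calc ‖B k‖ = ‖(((1 + δ k)⁻¹ : ℝ) : ℂ)‖ * ‖A + (δ k : ℂ) • 1‖ := norm_smul _ _
          _ = (1 + δ k)⁻¹ * ‖A + (δ k : ℂ) • 1‖ := by
              rw [Complex.norm_real, Real.norm_of_nonneg (by positivity)]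
          _ ≤ (1 + δ k)⁻¹ * (1 + δ k) := by
              apply mul_le_mul_of_nonneg_left h2 (by positivity)
          _ = 1 := by field_simp
      · rw [Matrix.isUnit_iff_isUnit_det, hB]
        simp only [Matrix.det_smul]
        apply IsUnit.mul
        · apply IsUnit.pow
          simp only [isUnit_iff_ne_zero, ne_eq, Complex.ofReal_eq_zero]
          positivity
        · rw [← Matrix.isUnit_iff_isUnit_det]
          exact hδu k
    have hδtend : Filter.Tendsto δ Filter.atTop (nhds 0) :=
      squeeze_zero (fun k => (hδ0 k).le) (fun k => (hδlt k).le)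
        tendsto_one_div_add_atTop_nhds_zero_nat
    have h1 : Filter.Tendsto (fun k => ((δ k : ℝ) : ℂ)) Filter.atTop (nhds 0) := by
      have := (Complex.continuous_ofReal.tendsto 0).comp hδtend
      exact this
    have hM : Filter.Tendsto (fun k => A + (δ k : ℂ) • (1 : Matrix (Fin 3) (Fin 3) ℂ))
        Filter.atTop (nhds A) := by
      have := Filter.Tendsto.add (tendsto_const_nhds (x := A))
        (h1.smul_const (1 : Matrix (Fin 3) (Fin 3) ℂ))
      simpa using this
    have hc : Filter.Tendsto (fun k => (((1 + δ k)⁻¹ : ℝ) : ℂ)) Filter.atTop (nhds 1) := by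
      have h2 : Filter.Tendsto (fun k => ((1 + δ k)⁻¹ : ℝ)) Filter.atTop (nhds 1) := by
        have h3 : Filter.Tendsto (fun k => (1 + δ k : ℝ)) Filter.atTop (nhds 1) := by
          have := Filter.Tendsto.add (tendsto_const_nhds (x := (1:ℝ))) hδtend
          simpa using this
        have := h3.inv₀ (by norm_num)
        simpa using this
      have h5 := (Complex.continuous_ofReal.tendsto 1).comp h2
      have h6 : (Complex.ofReal ∘ fun k => ((1 + δ k)⁻¹ : ℝ))
          = fun k => (((1 + δ k)⁻¹ : ℝ) : ℂ) := rfl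
      rw [h6] at h5
      simpa using h5
    have hBtend : Filter.Tendsto B Filter.atTop (nhds A) := by
      have h4 := hc.smul hM
      rw [one_smul] at h4
      exact h4
    exact isClosed_goodSet.mem_of_tendsto hBtend (Filter.Eventually.of_forall hBmem)
  exact hmem
end

section
/- A matrix norm on n×n complex matrices is unitarily invariant if and only if there exists a symmetric gauge function Φ on ℝⁿ such that ‖A‖ = Φ(σ₁(A),...,σₙ(A)) for all A, where σᵢ(A) are the singular values of A (von Neumann's theorem). -/
open scoped Matrix BigOperators

section VonNeumannAux

open Matrix Polynomial

variable {n : ℕ}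

lemma sg_charmatrix_conj (W H : Matrix (Fin n) (Fin n) ℂ) (hW : W ∈ Matrix.unitaryGroup (Fin n) ℂ) :
    charmatrix (W * H * star W) =
      (C : ℂ →+* ℂ[X]).mapMatrix W * charmatrix H * (C : ℂ →+* ℂ[X]).mapMatrix (star W) := by
  have h1 : (W : Matrix (Fin n) (Fin n) ℂ) * star W = 1 := (Matrix.mem_unitaryGroup_iff).mp hW
  have h2 : ((C : ℂ →+* ℂ[X]).mapMatrix W) * ((C : ℂ →+* ℂ[X]).mapMatrix (star W)) = 1 := by
    rw [← _root_.map_mul, h1, _root_.map_one]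
  have hcomm : ∀ M : Matrix (Fin n) (Fin n) ℂ[X],
      M * (Matrix.diagonal fun _ : Fin n => (X:ℂ[X])) =
      (Matrix.diagonal fun _ : Fin n => (X:ℂ[X])) * M := by
    intro M; ext i j; simp [Matrix.mul_diagonal, Matrix.diagonal_mul, mul_comm]
  simp only [charmatrix, Matrix.mul_sub, Matrix.sub_mul, _root_.map_mul]
  congr 1
  rw [Matrix.scalar_apply, hcomm, mul_assoc, h2, Matrix.mul_one]

lemma sg_charpoly_conj (W H : Matrix (Fin n) (Fin n) ℂ) (hW : W ∈ Matrix.unitaryGroup (Fin n) ℂ) :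
    (W * H * star W).charpoly = H.charpoly := by
  have h1 : (W : Matrix (Fin n) (Fin n) ℂ) * star W = 1 := (Matrix.mem_unitaryGroup_iff).mp hW
  have h2 : ((C : ℂ →+* ℂ[X]).mapMatrix W) * ((C : ℂ →+* ℂ[X]).mapMatrix (star W)) = 1 := by
    rw [← _root_.map_mul, h1, _root_.map_one]
  have h3 : ((C : ℂ →+* ℂ[X]).mapMatrix W).det * ((C : ℂ →+* ℂ[X]).mapMatrix (star W)).det = 1 := by
    rw [← Matrix.det_mul, h2, Matrix.det_one]
  unfold Matrix.charpoly
  rw [sg_charmatrix_conj W H hW, Matrix.det_mul, Matrix.det_mul]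
  calc ((C : ℂ →+* ℂ[X]).mapMatrix W).det * (charmatrix H).det *
        ((C : ℂ →+* ℂ[X]).mapMatrix (star W)).det
      = (((C : ℂ →+* ℂ[X]).mapMatrix W).det * ((C : ℂ →+* ℂ[X]).mapMatrix (star W)).det) *
        (charmatrix H).det := by ring
    _ = (charmatrix H).det := by rw [h3, one_mul]

lemma sg_charpoly_diagonal (d : Fin n → ℂ) :
    (Matrix.diagonal d).charpoly = ∏ i, (X - C (d i)) := by
  have : charmatrix (Matrix.diagonal d) = Matrix.diagonal (fun i => X - C (d i)) := by
    ext i j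
    by_cases h : i = j
    · subst h; simp
    · simp [h, Matrix.diagonal_apply_ne _ h]
  rw [Matrix.charpoly, this, Matrix.det_diagonal]

lemma sg_charpoly_hermitian (H : Matrix (Fin n) (Fin n) ℂ) (hH : H.IsHermitian) :
    H.charpoly = ∏ i, (X - C ((hH.eigenvalues i : ℝ) : ℂ)) := by
  conv_lhs => rw [hH.spectral_theorem]
  rw [Unitary.conjStarAlgAut_apply]
  rw [sg_charpoly_conj _ _ hH.eigenvectorUnitary.2, sg_charpoly_diagonal]
  rfl

-- multiset of eigenvalues determined by charpoly
lemma sg_eigenvalues_multiset_eq (H₁ H₂ : Matrix (Fin n) (Fin n) ℂ)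
    (h1 : H₁.IsHermitian) (h2 : H₂.IsHermitian) (h : H₁.charpoly = H₂.charpoly) :
    Multiset.map h1.eigenvalues Finset.univ.val = Multiset.map h2.eigenvalues Finset.univ.val := by
  rw [sg_charpoly_hermitian H₁ h1, sg_charpoly_hermitian H₂ h2] at h
  have key : ∀ (f : Fin n → ℝ), (∏ i, (X - C ((f i : ℝ) : ℂ))).roots =
      Multiset.map (fun i => ((f i : ℝ) : ℂ)) Finset.univ.val := by
    intro f
    have : (∏ i, (X - C ((f i : ℝ) : ℂ))) =
        (Multiset.map (fun a => X - C a) (Multiset.map (fun i => ((f i : ℝ):ℂ)) Finset.univ.val)).prod := by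
      rw [Multiset.map_map, Finset.prod_eq_multiset_prod]
      rfl
    rw [this, Polynomial.roots_multiset_prod_X_sub_C]
  have := congrArg Polynomial.roots h
  rw [key, key] at this
  have h3 : Multiset.map (fun x : ℝ => (x : ℂ)) (Multiset.map h1.eigenvalues Finset.univ.val)
      = Multiset.map (fun x : ℝ => (x : ℂ)) (Multiset.map h2.eigenvalues Finset.univ.val) := by
    simpa [Multiset.map_map, Function.comp_def] using this
  exact Multiset.map_injective Complex.ofReal_injective h3

lemma sg_multiset_ofFn (f : Fin n → ℝ) :
    (↑(List.ofFn f) : Multiset ℝ) = Multiset.map f Finset.univ.val := by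
  rw [List.ofFn_eq_map]
  rfl

lemma sg_sorted_eq_of_multiset_eq (f g : Fin n → ℝ)
    (h : Multiset.map f Finset.univ.val = Multiset.map g Finset.univ.val) :
    f ∘ Tuple.sort f = g ∘ Tuple.sort g := by
  have huniv : ∀ (e : Equiv.Perm (Fin n)), Multiset.map (⇑e) Finset.univ.val = Finset.univ.val := by
    intro e
    have := congrArg Finset.val (Finset.map_univ_equiv e)
    simpa [Finset.map_val] using this
  have hcomp : ∀ (u : Fin n → ℝ) (e : Equiv.Perm (Fin n)),
      Multiset.map (u ∘ e) Finset.univ.val = Multiset.map u Finset.univ.val := by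
    intro u e
    rw [← Multiset.map_map, huniv]
  have hperm : (List.ofFn (f ∘ Tuple.sort f)).Perm (List.ofFn (g ∘ Tuple.sort g)) := by
    rw [← Multiset.coe_eq_coe, sg_multiset_ofFn, sg_multiset_ofFn, hcomp, hcomp]
    exact h
  have hs1 : (List.ofFn (f ∘ Tuple.sort f)).Pairwise (· ≤ ·) :=
    (List.sortedLE_ofFn_iff.mpr (Tuple.monotone_sort f)).pairwise
  have hs2 : (List.ofFn (g ∘ Tuple.sort g)).Pairwise (· ≤ ·) :=
    (List.sortedLE_ofFn_iff.mpr (Tuple.monotone_sort g)).pairwise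
  have := List.Perm.eq_of_pairwise' hs1 hs2 hperm
  exact List.ofFn_injective this

lemma sg_singularValues_unitary_conj (U V A : Matrix (Fin n) (Fin n) ℂ)
    (hU : U ∈ Matrix.unitaryGroup (Fin n) ℂ) (hV : V ∈ Matrix.unitaryGroup (Fin n) ℂ) :
    singularValues (U * A * V) = singularValues A := by
  set h1 := Matrix.isHermitian_conjTranspose_mul_self (U * A * V)
  set h2 := Matrix.isHermitian_conjTranspose_mul_self A
  have hW : star V ∈ Matrix.unitaryGroup (Fin n) ℂ := Unitary.star_mem hV
  have hUU : (star U) * U = 1 := Matrix.mem_unitaryGroup_iff'.mp hU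
  have hkey : (U * A * V)ᴴ * (U * A * V) = (star V) * (Aᴴ * A) * star (star V) := by
    rw [star_star]
    simp only [Matrix.conjTranspose_mul]
    calc Vᴴ * (Aᴴ * Uᴴ) * (U * A * V) = Vᴴ * (Aᴴ * (Uᴴ * U) * A) * V := by
          simp only [Matrix.mul_assoc]
      _ = Vᴴ * (Aᴴ * A) * V := by
          rw [show Uᴴ * U = 1 from hUU]
          simp only [Matrix.mul_one, Matrix.mul_assoc]
      _ = star V * (Aᴴ * A) * V := rfl
  have hcp : ((U * A * V)ᴴ * (U * A * V)).charpoly = (Aᴴ * A).charpoly := by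
    rw [hkey]
    exact sg_charpoly_conj _ _ hW
  have hmult := sg_eigenvalues_multiset_eq _ _ h1 h2 hcp
  have hsorted := sg_sorted_eq_of_multiset_eq _ _ hmult
  funext i
  unfold singularValues
  rw [hsorted]

def sg_permMatrix (p : Equiv.Perm (Fin n)) : Matrix (Fin n) (Fin n) ℂ :=
  ((p⁻¹ : Equiv.Perm (Fin n)).toPEquiv).toMatrix

lemma sg_permMatrix_star (p : Equiv.Perm (Fin n)) :
    star (sg_permMatrix p) = (p.toPEquiv).toMatrix := by
  have h1 : star (sg_permMatrix p) = (sg_permMatrix p)ᵀ := by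
    ext i j
    simp only [Matrix.star_apply, Matrix.transpose_apply, sg_permMatrix, PEquiv.toMatrix_apply]
    split <;> simp
  rw [h1, sg_permMatrix, ← PEquiv.toMatrix_symm, ← Equiv.toPEquiv_symm]
  rfl

lemma sg_permMatrix_mem (p : Equiv.Perm (Fin n)) :
    sg_permMatrix p ∈ Matrix.unitaryGroup (Fin n) ℂ := by
  rw [Matrix.mem_unitaryGroup_iff']
  rw [sg_permMatrix_star, sg_permMatrix, PEquiv.toMatrix_toPEquiv_mul]
  ext i j
  simp [PEquiv.toMatrix_apply, Equiv.toPEquiv_apply, Matrix.one_apply, Equiv.eq_symm_apply]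

lemma sg_permMatrix_conj (p : Equiv.Perm (Fin n)) (d : Fin n → ℂ) :
    star (sg_permMatrix p) * Matrix.diagonal d * sg_permMatrix p = Matrix.diagonal (d ∘ p) := by
  rw [sg_permMatrix_star, sg_permMatrix, PEquiv.toMatrix_toPEquiv_mul,
    PEquiv.mul_toMatrix_toPEquiv, Matrix.submatrix_submatrix]
  have : (Matrix.diagonal d).submatrix (p ∘ id) (id ∘ ⇑(p⁻¹:Equiv.Perm (Fin n)).symm) =
      (Matrix.diagonal d).submatrix (⇑p) (⇑p) := by
    rw [Function.comp_id, Function.id_comp, Equiv.Perm.inv_def, Equiv.symm_symm]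
  rw [this, Matrix.submatrix_diagonal_equiv]

lemma sg_svd (A : Matrix (Fin n) (Fin n) ℂ) :
    ∃ U V : Matrix (Fin n) (Fin n) ℂ, U ∈ Matrix.unitaryGroup (Fin n) ℂ ∧
      V ∈ Matrix.unitaryGroup (Fin n) ℂ ∧
      A = U * Matrix.diagonal (fun i => ((singularValues A i : ℝ) : ℂ)) * V := by
  classical
  set hH := Matrix.isHermitian_conjTranspose_mul_self A with hHdef
  set eig : Fin n → ℝ := hH.eigenvalues with heig
  set W : Matrix (Fin n) (Fin n) ℂ := (hH.eigenvectorUnitary : Matrix (Fin n) (Fin n) ℂ) with hW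
  set p : Equiv.Perm (Fin n) := (Fin.revPerm).trans (Tuple.sort eig) with hp
  set σ : Fin n → ℝ := singularValues A with hσ
  have hσ_eq : ∀ i, σ i = Real.sqrt (eig (p i)) := fun i => rfl
  have heig_nonneg : ∀ i, 0 ≤ eig i := fun i =>
    Matrix.eigenvalues_conjTranspose_mul_self_nonneg A i
  have hσ_sq : ∀ i, ((σ i : ℝ) : ℂ) * ((σ i : ℝ) : ℂ) = ((eig (p i) : ℝ) : ℂ) := by
    intro i
    rw [hσ_eq]
    norm_cast
    exact Real.mul_self_sqrt (heig_nonneg _)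
  -- the diagonalizing unitary, with sorted eigenvalues
  set V₀ : Matrix (Fin n) (Fin n) ℂ := W * sg_permMatrix p with hV₀
  have hV₀mem : V₀ ∈ Matrix.unitaryGroup (Fin n) ℂ :=
    Submonoid.mul_mem _ hH.eigenvectorUnitary.2 (sg_permMatrix_mem p)
  have hdiag : star V₀ * (Aᴴ * A) * V₀ =
      Matrix.diagonal (fun i => ((σ i : ℝ):ℂ) * ((σ i : ℝ):ℂ)) := by
    have h1 : star V₀ * (Aᴴ * A) * V₀ =
        star (sg_permMatrix p) * (star W * (Aᴴ * A) * W) * sg_permMatrix p := by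
      rw [hV₀, StarMul.star_mul]
      simp only [Matrix.mul_assoc]
    have harg : ((RCLike.ofReal ∘ hH.eigenvalues) ∘ ⇑p) =
        (fun i => ((σ i : ℝ):ℂ) * ((σ i : ℝ):ℂ)) := by
      funext i
      simp only [Function.comp_apply]
      exact (hσ_sq i).symm
    rw [h1, show star W * (Aᴴ * A) * W = diagonal (RCLike.ofReal ∘ hH.eigenvalues) by
      have := hH.conjStarAlgAut_star_eigenvectorUnitary
      simpa [Unitary.conjStarAlgAut_apply] using this, sg_permMatrix_conj]
    rw [show ((RCLike.ofReal : ℝ → ℂ) ∘ hH.eigenvalues) ∘ ⇑p =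
        (fun i => ((σ i : ℝ):ℂ) * ((σ i : ℝ):ℂ)) from harg]
  set B : Matrix (Fin n) (Fin n) ℂ := A * V₀ with hB
  have hBtB : Bᴴ * B = Matrix.diagonal (fun i => ((σ i : ℝ):ℂ) * ((σ i : ℝ):ℂ)) := by
    rw [hB, Matrix.conjTranspose_mul, ← hdiag]
    simp only [Matrix.mul_assoc]
    rfl
  -- columns of B
  set col : Fin n → EuclideanSpace ℂ (Fin n) := fun i => WithLp.toLp 2 (fun k => B k i) with hcol
  have hinner : ∀ i j, (inner ℂ (col i) (col j) : ℂ) =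
      if i = j then ((σ i : ℝ):ℂ) * ((σ i : ℝ):ℂ) else 0 := by
    intro i j
    have : (inner ℂ (col i) (col j) : ℂ) = (Bᴴ * B) i j := by
      rw [PiLp.inner_apply, Matrix.mul_apply]
      simp [Matrix.conjTranspose_apply, RCLike.inner_apply, hcol, mul_comm]
    rw [this, hBtB, Matrix.diagonal_apply]
  -- orthonormal family on support
  set s : Set (Fin n) := {i | σ i ≠ 0} with hs
  set v : Fin n → EuclideanSpace ℂ (Fin n) := fun i => (((σ i : ℝ):ℂ)⁻¹) • col i with hv
  have hvon : Orthonormal ℂ (s.restrict v) := by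
    rw [orthonormal_iff_ite]
    intro ⟨i, hi⟩ ⟨j, hj⟩
    simp only [Set.restrict, Set.domRestrict_apply, hv, inner_smul_left, inner_smul_right, hinner]
    by_cases h : i = j
    · subst h
      have hσi : ((σ i : ℝ):ℂ) ≠ 0 := by
        simpa using Complex.ofReal_ne_zero.mpr hi
      simp only [if_pos rfl, Subtype.mk.injEq, eq_self_iff_true, if_true, map_inv₀,
        Complex.conj_ofReal]
      field_simp
    · simp [h, Subtype.mk.injEq]
  have hcard : Module.finrank ℂ (EuclideanSpace ℂ (Fin n)) = Fintype.card (Fin n) := by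
    simp
  obtain ⟨b, hb⟩ := hvon.exists_orthonormalBasis_extension_of_card_eq hcard
  -- U from columns of b
  set U : Matrix (Fin n) (Fin n) ℂ := Matrix.of (fun k i => b i k) with hU
  have hUmem : U ∈ Matrix.unitaryGroup (Fin n) ℂ := by
    rw [Matrix.mem_unitaryGroup_iff']
    ext i j
    have := (b.orthonormal).2 -- unused
    have hb2 : (inner ℂ (b i) (b j) : ℂ) = if i = j then 1 else 0 :=
      orthonormal_iff_ite.mp b.orthonormal i j
    rw [Matrix.mul_apply]
    simp only [Matrix.conjTranspose_apply, Matrix.star_apply, hU, Matrix.of_apply]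
    rw [Matrix.one_apply, ← hb2, PiLp.inner_apply]
    simp [RCLike.inner_apply, mul_comm]
  have hUdiag : U * Matrix.diagonal (fun i => ((σ i : ℝ):ℂ)) = B := by
    ext k i
    rw [Matrix.mul_diagonal]
    simp only [hU, Matrix.of_apply]
    by_cases hi : σ i = 0
    · have hcol0 : col i = 0 := by
        have : (inner ℂ (col i) (col i) : ℂ) = 0 := by rw [hinner, if_pos rfl, hi]; simp
        exact inner_self_eq_zero.mp this
      have : B k i = 0 := by
        have := congrFun (congrArg WithLp.ofLp hcol0) k
        simpa [hcol] using this
      rw [this, hi]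
      simp
    · have hmem : i ∈ s := hi
      rw [hb i hmem]
      simp only [hv, PiLp.smul_apply, smul_eq_mul, hcol]
      have hσi : ((σ i : ℝ):ℂ) ≠ 0 := Complex.ofReal_ne_zero.mpr hi
      field_simp
  refine ⟨U, star V₀, hUmem, Unitary.star_mem hV₀mem, ?_⟩
  have : A = B * star V₀ := by
    rw [hB, Matrix.mul_assoc, Matrix.mem_unitaryGroup_iff.mp hV₀mem, Matrix.mul_one]
  rw [this, ← hUdiag]

lemma sg_signMatrix_mem (x : Fin n → ℝ) :
    Matrix.diagonal (fun i => if x i < 0 then (-1 : ℂ) else 1) ∈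
      Matrix.unitaryGroup (Fin n) ℂ := by
  rw [Matrix.mem_unitaryGroup_iff', Matrix.star_eq_conjTranspose,
    Matrix.diagonal_conjTranspose, Matrix.diagonal_mul_diagonal]
  have h1 : (fun i => star (fun i => if x i < 0 then (-1:ℂ) else 1) i *
      (if x i < 0 then (-1:ℂ) else 1)) = fun _ => (1:ℂ) := by
    funext i
    by_cases h : x i < 0 <;> simp [h]
  rw [h1, Matrix.diagonal_one]

end VonNeumannAux

/-- Von Neumann's theorem: a matrix norm is unitarily invariant iff it is a
symmetric gauge function of the singular values. -/
theorem vonNeumann_unitarilyInvariant_iff_gauge {n : ℕ}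
    (N : Matrix (Fin n) (Fin n) ℂ → ℝ)
    (hN0 : ∀ A, 0 ≤ N A) (hNzero : ∀ A, N A = 0 ↔ A = 0)
    (hNsmul : ∀ (c : ℂ) A, N (c • A) = ‖c‖ * N A)
    (hNadd : ∀ A B, N (A + B) ≤ N A + N B)
    (hNmul : ∀ A B, N (A * B) ≤ N A * N B) :
    (∀ (U V : Matrix (Fin n) (Fin n) ℂ), U ∈ Matrix.unitaryGroup (Fin n) ℂ →
        V ∈ Matrix.unitaryGroup (Fin n) ℂ → ∀ A, N (U * A * V) = N A) ↔
    ∃ Φ : (Fin n → ℝ) → ℝ,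
      (∀ x, 0 ≤ Φ x) ∧ (∀ x, Φ x = 0 ↔ x = 0) ∧
      (∀ (c : ℝ) x, Φ (c • x) = |c| * Φ x) ∧
      (∀ x y, Φ (x + y) ≤ Φ x + Φ y) ∧
      (∀ (e : Equiv.Perm (Fin n)) x, Φ (x ∘ e) = Φ x) ∧
      (∀ x, Φ (fun i => |x i|) = Φ x) ∧
      (∀ A, N A = Φ (singularValues A)) := by
  constructor
  · intro hUI
    refine ⟨fun x => N (Matrix.diagonal fun i => ((x i : ℝ) : ℂ)), fun x => hN0 _, ?_, ?_, ?_, ?_, ?_, ?_⟩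
    · intro x
      simp only []
      rw [hNzero]
      constructor
      · intro h
        funext i
        have := congrFun (congrFun h i) i
        simpa [Matrix.diagonal_apply_eq] using this
      · intro h; subst h; simp
    · intro c x
      show N (Matrix.diagonal fun i => (((c • x) i : ℝ) : ℂ)) =
        |c| * N (Matrix.diagonal fun i => ((x i : ℝ) : ℂ))
      have h1 : (Matrix.diagonal fun i => (((c • x) i : ℝ) : ℂ)) =
          (c : ℂ) • Matrix.diagonal fun i => ((x i : ℝ) : ℂ) := by
        ext i j
        by_cases h : i = j
        · subst h
          simp only [Matrix.diagonal_apply_eq, Matrix.smul_apply, Pi.smul_apply, smul_eq_mul]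
          push_cast
          ring
        · simp [Matrix.diagonal_apply_ne _ h, h]
      rw [h1, hNsmul]
      congr 1
      exact Complex.norm_real c
    · intro x y
      show N (Matrix.diagonal fun i => (((x + y) i : ℝ) : ℂ)) ≤
        N (Matrix.diagonal fun i => ((x i : ℝ) : ℂ)) +
        N (Matrix.diagonal fun i => ((y i : ℝ) : ℂ))
      have h1 : (Matrix.diagonal fun i => (((x + y) i : ℝ) : ℂ)) =
          (Matrix.diagonal fun i => ((x i : ℝ) : ℂ)) +
          (Matrix.diagonal fun i => ((y i : ℝ) : ℂ)) := by
        ext i j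
        by_cases h : i = j
        · subst h
          simp only [Matrix.diagonal_apply_eq, Matrix.add_apply, Pi.add_apply]
          push_cast
          ring
        · simp [Matrix.diagonal_apply_ne _ h, h]
      rw [h1]
      exact hNadd _ _
    · intro e x
      show N (Matrix.diagonal fun i => (((x ∘ e) i : ℝ) : ℂ)) =
        N (Matrix.diagonal fun i => ((x i : ℝ) : ℂ))
      have key : (Matrix.diagonal fun i => (((x ∘ e) i : ℝ) : ℂ)) =
          star (sg_permMatrix e) * (Matrix.diagonal fun i => ((x i : ℝ) : ℂ)) *
            sg_permMatrix e := by
        rw [sg_permMatrix_conj]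
        rfl
      rw [key, hUI _ _ (Unitary.star_mem (sg_permMatrix_mem e)) (sg_permMatrix_mem e)]
    · intro x
      show N (Matrix.diagonal fun i => ((|x i| : ℝ) : ℂ)) =
        N (Matrix.diagonal fun i => ((x i : ℝ) : ℂ))
      have hDmem := sg_signMatrix_mem x
      have key : (Matrix.diagonal fun i => ((|x i| : ℝ) : ℂ)) =
          Matrix.diagonal (fun i => if x i < 0 then (-1 : ℂ) else 1) *
            (Matrix.diagonal fun i => ((x i : ℝ) : ℂ)) * 1 := by
        rw [Matrix.mul_one, Matrix.diagonal_mul_diagonal]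
        ext i j
        by_cases h : i = j
        · subst h
          simp only [Matrix.diagonal_apply_eq]
          by_cases h2 : x i < 0
          · rw [abs_of_neg h2]; simp [h2]
          · rw [abs_of_nonneg (not_lt.mp h2)]; simp [h2]
        · simp [Matrix.diagonal_apply_ne _ h]
      rw [key, hUI _ 1 hDmem (Submonoid.one_mem _) _]
    · intro A
      obtain ⟨U, V, hU, hV, hA⟩ := sg_svd A
      show N A = N (Matrix.diagonal fun i => ((singularValues A i : ℝ) : ℂ))
      calc N A = N (U * Matrix.diagonal (fun i => ((singularValues A i : ℝ) : ℂ)) * V) := by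
            rw [← hA]
        _ = N (Matrix.diagonal (fun i => ((singularValues A i : ℝ) : ℂ))) := hUI U V hU hV _
  · rintro ⟨Φ, _, _, _, _, _, _, hrep⟩ U V hU hV A
    rw [hrep, hrep, sg_singularValues_unitary_conj U V A hU hV]
end

section
/- If an n×n contraction A has exactly m singular values strictly less than 1 (and n−m singular values equal to 1), then A admits a unitary dilation of size (n+m)×(n+m): there exist matrices B (n×m), C (m×n), D (m×m) such that the block matrix [[A, B],[C, D]] is unitary. -/
open scoped Matrix BigOperators

private theorem eig_le_one_aux {n : ℕ} (A : Matrix (Fin n) (Fin n) ℂ) (hA : specNorm A ≤ 1)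
    (i : Fin n) :
    (Matrix.isHermitian_conjTranspose_mul_self A).eigenvalues i ≤ 1 := by
  classical
  set H : Matrix (Fin n) (Fin n) ℂ := Aᴴ * A with hHdef
  have hH : H.IsHermitian := Matrix.isHermitian_conjTranspose_mul_self A
  have hT1 : ‖Matrix.toEuclideanCLM (𝕜 := ℂ) H‖ ≤ 1 := by
    have h1 : Matrix.toEuclideanCLM (𝕜 := ℂ) H =
        star (Matrix.toEuclideanCLM (𝕜 := ℂ) A) * Matrix.toEuclideanCLM (𝕜 := ℂ) A := by
      rw [hHdef, map_mul, ← map_star, Matrix.star_eq_conjTranspose]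
    rw [h1, ContinuousLinearMap.star_eq_adjoint]
    have h2 := ContinuousLinearMap.norm_adjoint_comp_self (Matrix.toEuclideanCLM (𝕜 := ℂ) A)
    have h0 : (0:ℝ) ≤ specNorm A := norm_nonneg _
    calc ‖ContinuousLinearMap.adjoint (Matrix.toEuclideanCLM (𝕜 := ℂ) A) *
          Matrix.toEuclideanCLM (𝕜 := ℂ) A‖ = specNorm A * specNorm A := h2
      _ ≤ 1 := by nlinarith
  set v := hH.eigenvectorBasis i with hv
  have hv1 : ‖v‖ = 1 := hH.eigenvectorBasis.orthonormal.1 i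
  have happ : Matrix.toEuclideanCLM (𝕜 := ℂ) H v = hH.eigenvalues i • v := by
    have h2 := Matrix.toEuclideanCLM_toLp (𝕜 := ℂ) H (⇑v)
    have h3 : WithLp.toLp 2 (⇑v) = v := rfl
    rw [h3] at h2
    rw [h2]
    rw [hH.mulVec_eigenvectorBasis i]
    rfl
  have hnn : 0 ≤ hH.eigenvalues i := Matrix.eigenvalues_conjTranspose_mul_self_nonneg A i
  have hb := (Matrix.toEuclideanCLM (𝕜 := ℂ) H).le_opNorm v
  rw [happ, norm_smul, hv1, mul_one, mul_one] at hb
  rw [Real.norm_eq_abs, abs_of_nonneg hnn] at hb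
  exact le_trans hb hT1

/-- A contraction with exactly m singular values strictly less than 1 admits a
unitary dilation of size (n+m)×(n+m). -/
theorem unitary_dilation_minimal_size {n m : ℕ}
    (A : Matrix (Fin n) (Fin n) ℂ) (hA : specNorm A ≤ 1)
    (hm : (Finset.univ.filter (fun i => singularValues A i < 1)).card = m) :
    ∃ (B : Matrix (Fin n) (Fin m) ℂ) (C : Matrix (Fin m) (Fin n) ℂ)
      (D : Matrix (Fin m) (Fin m) ℂ),
      Matrix.fromBlocks A B C D ∈ Matrix.unitaryGroup (Fin n ⊕ Fin m) ℂ := by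
  classical
  have hH : (Aᴴ * A).IsHermitian := Matrix.isHermitian_conjTranspose_mul_self A
  set lam := hH.eigenvalues with hlam
  have hnn : ∀ i, 0 ≤ lam i := fun i => Matrix.eigenvalues_conjTranspose_mul_self_nonneg A i
  have hle : ∀ i, lam i ≤ 1 := fun i => eig_le_one_aux A hA i
  -- Step 1: exactly m eigenvalues of Aᴴ*A are < 1
  have hcard : (Finset.univ.filter (fun j => lam j < 1)).card = m := by
    set σ := Tuple.sort lam with hσ
    rw [← hm]
    have hsv : ∀ i : Fin n, singularValues A i < 1 ↔ lam (σ i.rev) < 1 := by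
      intro i
      unfold singularValues
      simp only [Function.comp_apply, ← hlam, ← hσ]
      conv_lhs => rw [← Real.sqrt_one]
      exact Real.sqrt_lt_sqrt_iff (hnn _)
    have heq : (Finset.univ.filter (fun i : Fin n => singularValues A i < 1)) =
        (Finset.univ.filter (fun i : Fin n => lam (σ i.rev) < 1)) := by
      apply Finset.filter_congr
      intro i _
      simp [hsv i]
    rw [heq]
    apply Finset.card_bij (fun a _ => (σ.symm a).rev)
    · intro a ha
      simp only [Finset.mem_filter, Finset.mem_univ, true_and] at ha ⊢
      simpa using ha
    · intro a ha b hb hab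
      exact σ.symm.injective (Fin.rev_injective hab)
    · intro b hb
      refine ⟨σ b.rev, ?_, ?_⟩
      · simp only [Finset.mem_filter, Finset.mem_univ, true_and] at hb ⊢
        exact hb
      · simp
  -- Step 2: construct C with Aᴴ*A + Cᴴ*C = 1
  obtain ⟨C, hC⟩ : ∃ C : Matrix (Fin m) (Fin n) ℂ, Aᴴ * A + Cᴴ * C = 1 := by
    set ε := Finset.equivFinOfCardEq hcard with hε
    set e : Fin m → Fin n := fun k => (ε.symm k : Fin n) with he
    have he_mem : ∀ k, lam (e k) < 1 := fun k => (Finset.mem_filter.mp (ε.symm k).2).2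
    have he_inj : Function.Injective e := fun a b hab =>
      ε.symm.injective (Subtype.val_injective hab)
    have he_surj : ∀ l, lam l < 1 → ∃ k, e k = l := by
      intro l hl
      refine ⟨ε ⟨l, Finset.mem_filter.mpr ⟨Finset.mem_univ _, hl⟩⟩, ?_⟩
      simp [he]
    set Q : Matrix (Fin n) (Fin n) ℂ := (hH.eigenvectorUnitary : Matrix (Fin n) (Fin n) ℂ)
      with hQ
    set R : Matrix (Fin m) (Fin n) ℂ :=
      Matrix.of (fun k l => if l = e k then ((Real.sqrt (1 - lam l) : ℝ) : ℂ) else 0) with hR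
    have hRR : Rᴴ * R = 1 - Matrix.diagonal (RCLike.ofReal ∘ lam) := by
      ext i j
      rw [Matrix.mul_apply]
      simp only [Matrix.conjTranspose_apply, hR, Matrix.of_apply]
      have hterm : ∀ k : Fin m, star (if i = e k then ((Real.sqrt (1 - lam i) : ℝ) : ℂ) else 0) *
          (if j = e k then ((Real.sqrt (1 - lam j) : ℝ) : ℂ) else 0) =
          if i = e k ∧ j = e k then ((1 - lam i : ℝ) : ℂ) else 0 := by
        intro k
        by_cases h1 : i = e k
        · by_cases h2 : j = e k
          · have hij : j = i := h2.trans h1.symm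
            subst hij
            simp only [h1, h2, and_self, if_true]
            rw [Complex.star_def, Complex.conj_ofReal, ← Complex.ofReal_mul,
              Real.mul_self_sqrt (by linarith [hle (e k)])]
          · simp [h1, h2]
        · simp [h1]
      rw [Finset.sum_congr rfl (fun k _ => hterm k)]
      by_cases hij : i = j
      · subst hij
        simp only [and_self]
        by_cases hi : lam i < 1
        · obtain ⟨k₀, hk₀⟩ := he_surj i hi
          have hiff : ∀ k : Fin m, (i = e k) = (k₀ = k) :=
            fun k => propext ⟨fun h => he_inj (hk₀.trans h), fun h => h ▸ hk₀.symm⟩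
          simp only [hiff]
          rw [Finset.sum_ite_eq]
          simp [Matrix.one_apply, Matrix.diagonal_apply, Complex.ofReal_sub]
        · have hi1 : lam i = 1 := le_antisymm (hle i) (not_lt.mp hi)
          rw [Finset.sum_eq_zero (fun k _ => by
            have : ¬ (i = e k) := fun hk => hi (hk ▸ he_mem k)
            simp [this])]
          simp [hi1, Matrix.one_apply, Matrix.diagonal_apply]
      · rw [Finset.sum_eq_zero (fun k _ => by
          have : ¬ (i = e k ∧ j = e k) := fun ⟨h1, h2⟩ => hij (h1.trans h2.symm)
          simp [this])]
        simp [Matrix.one_apply, hij, Matrix.diagonal_apply]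
    refine ⟨R * star Q, ?_⟩
    have hCt : (R * star Q)ᴴ = Q * Rᴴ := by
      rw [Matrix.conjTranspose_mul, Matrix.star_eq_conjTranspose,
        Matrix.conjTranspose_conjTranspose]
    have hQU : Q * star Q = 1 := Matrix.mem_unitaryGroup_iff.mp hH.eigenvectorUnitary.2
    have hassoc : (Q * Rᴴ) * (R * star Q) = Q * (Rᴴ * R) * star Q := by
      rw [Matrix.mul_assoc Q Rᴴ (R * star Q), ← Matrix.mul_assoc Rᴴ R (star Q),
        ← Matrix.mul_assoc]
    have hspec : Aᴴ * A = Q * Matrix.diagonal (RCLike.ofReal ∘ lam) * star Q := by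
      rw [hH.spectral_theorem, Unitary.conjStarAlgAut_apply]
    calc Aᴴ * A + (R * star Q)ᴴ * (R * star Q)
        = Q * Matrix.diagonal (RCLike.ofReal ∘ lam) * star Q
          + Q * (1 - Matrix.diagonal (RCLike.ofReal ∘ lam)) * star Q := by
          rw [hCt, hassoc, hRR, ← hspec]
      _ = Q * (Matrix.diagonal (RCLike.ofReal ∘ lam)
          + (1 - Matrix.diagonal (RCLike.ofReal ∘ lam))) * star Q := by
          rw [Matrix.mul_add, Matrix.add_mul]
      _ = 1 := by
          rw [show Matrix.diagonal (RCLike.ofReal ∘ lam)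
            + (1 - Matrix.diagonal (RCLike.ofReal ∘ lam)) = (1 : Matrix (Fin n) (Fin n) ℂ)
              by abel, mul_one, hQU]
  -- Step 3: extend the orthonormal columns of [A; C] to a unitary matrix
  set E := EuclideanSpace ℂ (Fin n ⊕ Fin m) with hE
  set v : Fin n → E := fun j => (WithLp.equiv 2 _).symm
    (Sum.elim (fun i => A i j) (fun k => C k j)) with hv
  have hinner : ∀ j j' : Fin n, (inner ℂ (v j) (v j') : ℂ) = if j = j' then 1 else 0 := by
    intro j j'
    rw [PiLp.inner_apply]
    have hip : ∀ p : Fin n ⊕ Fin m, (inner ℂ ((v j) p) ((v j') p) : ℂ)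
        = star ((v j) p) * ((v j') p) := fun p => RCLike.inner_apply' _ _
    simp only [hip]
    rw [Fintype.sum_sum_type]
    have h1 : (∑ i : Fin n, star ((v j) (Sum.inl i)) * ((v j') (Sum.inl i)))
        + (∑ k : Fin m, star ((v j) (Sum.inr k)) * ((v j') (Sum.inr k)))
        = (Aᴴ * A) j j' + (Cᴴ * C) j j' := by
      rw [Matrix.mul_apply, Matrix.mul_apply]
      congr 1
    rw [h1, ← Matrix.add_apply, hC, Matrix.one_apply]
  have horth : Orthonormal ℂ (Set.restrict (Set.range Sum.inl)
      (Sum.elim v (fun _ : Fin m => (0 : E)))) := by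
    rw [orthonormal_iff_ite]
    rintro ⟨p, hp⟩ ⟨q, hq⟩
    obtain ⟨j, rfl⟩ := hp
    obtain ⟨j', rfl⟩ := hq
    change inner ℂ (v j) (v j') = _
    rw [hinner j j']
    by_cases h : j = j'
    · subst h; simp
    · simp [h, Subtype.ext_iff]
  obtain ⟨b, hb⟩ := horth.exists_orthonormalBasis_extension_of_card_eq
    (finrank_euclideanSpace (𝕜 := ℂ) (ι := Fin n ⊕ Fin m))
  have hbl : ∀ j : Fin n, b (Sum.inl j) = v j := by
    intro j
    have := hb (Sum.inl j) ⟨j, rfl⟩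
    simpa using this
  set B' : Matrix (Fin n) (Fin m) ℂ := Matrix.of (fun i k => b (Sum.inr k) (Sum.inl i)) with hB'
  set D' : Matrix (Fin m) (Fin m) ℂ := Matrix.of (fun k k' => b (Sum.inr k') (Sum.inr k)) with hD'
  set U : Matrix (Fin n ⊕ Fin m) (Fin n ⊕ Fin m) ℂ := Matrix.fromBlocks A B' C D' with hUdef
  have hU : ∀ (r s : Fin n ⊕ Fin m), U r s = b s r := by
    rintro (i | k) (j | k')
    · show A i j = b (Sum.inl j) (Sum.inl i)
      rw [hbl j]; rfl
    · rfl
    · show C k j = b (Sum.inl j) (Sum.inr k)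
      rw [hbl j]; rfl
    · rfl
  refine ⟨B', C, D', ?_⟩
  rw [Matrix.mem_unitaryGroup_iff']
  ext p q
  rw [Matrix.mul_apply, Matrix.one_apply]
  have hsum : ∀ r, (star U) p r * U r q = star (b p r) * (b q r) := by
    intro r
    rw [Matrix.star_eq_conjTranspose, Matrix.conjTranspose_apply, hU r p, hU r q]
  rw [Finset.sum_congr rfl (fun r _ => hsum r)]
  have hfin := (orthonormal_iff_ite.mp b.orthonormal) p q
  rw [PiLp.inner_apply] at hfin
  simpa [mul_comm] using hfin
end

section
/- If the block matrix [[A, B],[C, D]] of size (n+m)×(n+m) is unitary, then every singular value of the n×n block A that is strictly less than 1 contributes to a lower bound: A has at most m singular values strictly less than 1. Equivalently, the minimal dimension of a unitary dilation of a contraction A is n plus the number of singular values of A strictly less than 1. -/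
open scoped Matrix BigOperators

/-- If [[A,B],[C,D]] of size (n+m)×(n+m) is unitary, then the n×n block A has at
most m singular values strictly less than 1. -/
theorem singularValues_lt_one_le_dilation_size {n m : ℕ}
    (A : Matrix (Fin n) (Fin n) ℂ) (B : Matrix (Fin n) (Fin m) ℂ)
    (C : Matrix (Fin m) (Fin n) ℂ) (D : Matrix (Fin m) (Fin m) ℂ)
    (h : Matrix.fromBlocks A B C D ∈ Matrix.unitaryGroup (Fin n ⊕ Fin m) ℂ) :
    (Finset.univ.filter (fun i => singularValues A i < 1)).card ≤ m := by
  classical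
  have hH := Matrix.isHermitian_conjTranspose_mul_self A
  -- Step 1: unitarity gives Aᴴ*A + Cᴴ*C = 1
  have hU : (Matrix.fromBlocks A B C D)ᴴ * Matrix.fromBlocks A B C D = 1 := h.1
  have hkey : Aᴴ * A + Cᴴ * C = (1 : Matrix (Fin n) (Fin n) ℂ) := by
    have h11 := congrArg Matrix.toBlocks₁₁ hU
    simpa [Matrix.fromBlocks_conjTranspose, Matrix.fromBlocks_multiply,
      ← Matrix.fromBlocks_one, Matrix.toBlocks_fromBlocks₁₁] using h11
  have hCC : Cᴴ * C = (1 : Matrix (Fin n) (Fin n) ℂ) - Aᴴ * A := eq_sub_of_add_eq' hkey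
  -- the eigenvector unitary and the diagonal matrix
  set U : Matrix (Fin n) (Fin n) ℂ := (hH.eigenvectorUnitary : Matrix (Fin n) (Fin n) ℂ)
    with hUdef
  set d : Fin n → ℂ := fun i => 1 - (hH.eigenvalues i : ℂ) with hddef
  have hUU : U * star U = 1 := Matrix.mem_unitaryGroup_iff.mp hH.eigenvectorUnitary.2
  have hspec : Aᴴ * A = U * Matrix.diagonal (RCLike.ofReal ∘ hH.eigenvalues) * star U :=
    hH.spectral_theorem
  have honediag : (1 : Matrix (Fin n) (Fin n) ℂ)
      - Matrix.diagonal (RCLike.ofReal ∘ hH.eigenvalues) = Matrix.diagonal d := by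
    ext i j
    by_cases hij : i = j <;>
      simp [Matrix.diagonal_apply, Matrix.one_apply, hddef, hij]
  have hdiag : (1 : Matrix (Fin n) (Fin n) ℂ) - Aᴴ * A = U * Matrix.diagonal d * star U := by
    calc (1 : Matrix (Fin n) (Fin n) ℂ) - Aᴴ * A
        = U * 1 * star U - U * Matrix.diagonal (RCLike.ofReal ∘ hH.eigenvalues) * star U := by
          rw [mul_one, hUU]
          exact congrArg (fun X => 1 - X) hspec
      _ = U * ((1 : Matrix (Fin n) (Fin n) ℂ)
            - Matrix.diagonal (RCLike.ofReal ∘ hH.eigenvalues)) * star U := by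
          rw [Matrix.mul_sub, Matrix.sub_mul, mul_one]
      _ = U * Matrix.diagonal d * star U := by rw [honediag]
  -- rank bound
  have hdetU : IsUnit U.det := Matrix.UnitaryGroup.det_isUnit hH.eigenvectorUnitary
  have hdetUs : IsUnit (star U).det := by
    rw [Matrix.star_eq_conjTranspose, Matrix.det_conjTranspose]
    exact hdetU.star
  have hrank : (Matrix.diagonal d).rank ≤ m := by
    have h1 : (Cᴴ * C).rank ≤ m :=
      le_trans (Matrix.rank_mul_le_right _ _) (by simpa using C.rank_le_card_height)
    calc (Matrix.diagonal d).rank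
        = (U * Matrix.diagonal d * star U).rank := by
          rw [Matrix.rank_mul_eq_left_of_isUnit_det _ _ hdetUs,
            Matrix.rank_mul_eq_right_of_isUnit_det _ _ hdetU]
      _ = (Cᴴ * C).rank := by rw [← hdiag, ← hCC]
      _ ≤ m := h1
  have hranknz : (Matrix.diagonal d).rank = Fintype.card {i // d i ≠ 0} :=
    Matrix.rank_diagonal _
  -- counting
  set e : Fin n ≃ Fin n := Fin.revPerm.trans (Tuple.sort hH.eigenvalues) with hedef
  have hcount : (Finset.univ.filter (fun i => singularValues A i < 1)).card
      = (Finset.univ.filter (fun j => hH.eigenvalues j < 1)).card := by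
    refine Finset.card_equiv e (fun i => ?_)
    simp only [Finset.mem_filter_univ]
    simp only [Finset.mem_filter, Finset.mem_univ, true_and, hedef, Equiv.trans_apply,
      Fin.revPerm_apply, singularValues, Function.comp_apply]
    constructor
    · intro hs
      have := (Real.sqrt_lt' one_pos).mp hs
      simpa using this
    · intro hlt
      exact (Real.sqrt_lt' one_pos).mpr (by simpa using hlt)
  have hle : (Finset.univ.filter (fun j => hH.eigenvalues j < 1)).card
      ≤ (Finset.univ.filter (fun j => d j ≠ 0)).card := by
    apply Finset.card_le_card
    intro j hj
    simp only [Finset.mem_filter, Finset.mem_univ, true_and, hddef] at hj ⊢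
    intro hzero
    have h1 : (1 : ℂ) = (hH.eigenvalues j : ℂ) := sub_eq_zero.mp hzero
    have h2 : hH.eigenvalues j = 1 := by exact_mod_cast h1.symm
    linarith
  have hcardsub : (Finset.univ.filter (fun j => d j ≠ 0)).card
      = Fintype.card {i // d i ≠ 0} := (Fintype.card_subtype _).symm
  rw [hcount]
  exact hle.trans (by rw [hcardsub, ← hranknz]; exact hrank)
end
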